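/- Let f : Ω → ℝ be continuous, λ > 0 a real number, h : Ω → ℝ continuous, and ν a Borel probability measure on Ω such that L_f h = λh and ∫_Ω L_f φ dν = λ ∫_Ω φ dν for every continuous φ. Then for all continuous φ₁, φ₂ : Ω → ℝ and every n ≥ 1: | ∫_Ω (φ₁∘σ^n)·φ₂·h dν − (∫_Ω φ₁·h dν)(∫_Ω φ₂·h dν) | ≤ ( ∫_Ω |φ₁| dν ) · ‖ λ^{−n} L_f^n( φ₂·h − h·∫_Ω φ₂·h dν ) ‖_0. -/

import Mathlib

open MeasureTheory Filter

noncomputable section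

namespace Paper

variable {M : Type*} [MetricSpace M]

/-- Prepend one symbol: `ax = (a, x₁, x₂, …)`. -/
def cons (a : M) (x : ℕ → M) : ℕ → M
  | 0 => a
  | n + 1 => x n

/-- Prepend a finite word `a ∈ Mⁿ`. -/
def consW {n : ℕ} (a : Fin n → M) (x : ℕ → M) : ℕ → M :=
  fun k => if h : k < n then a ⟨k, h⟩ else x (k - n)

/-- The left shift `σ`. -/
def shift (x : ℕ → M) : ℕ → M := fun n => x (n + 1)

/-- Birkhoff sum `Sₙ f = f + f∘σ + … + f∘σ^{n-1}`. -/
def birk (f : (ℕ → M) → ℝ) (n : ℕ) (x : ℕ → M) : ℝ :=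
  ∑ i ∈ Finset.range n, f (shift^[i] x)

/-- The metric `d_Ω(x,y) = Σ_{n≥1} 2^{-n} d(xₙ,yₙ)`. -/
def dOmega (x y : ℕ → M) : ℝ :=
  ∑' n : ℕ, (1 / 2 : ℝ) ^ (n + 1) * dist (x n) (y n)

/-- `dₙ(x,y) = max_{0 ≤ k < n} d_Ω(σᵏx, σᵏy)`. -/
def dN (n : ℕ) (x y : ℕ → M) : ℝ :=
  ⨆ k : Fin n, dOmega (shift^[(k : ℕ)] x) (shift^[(k : ℕ)] y)

/-- The (strong) Walters condition. -/
def Walters (f : (ℕ → M) → ℝ) : Prop :=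
  ∀ ε : ℝ, 0 < ε → ∃ η : ℝ, 0 < η ∧ ∀ n : ℕ, 1 ≤ n → ∀ x y : ℕ → M,
    dN n x y ≤ η → |birk f n x - birk f n y| ≤ ε

/-- `C_f(x,y) = sup_{n ≥ 1} sup_{a ∈ Mⁿ} (Sₙf(ax) − Sₙf(ay))`, a value in `(−∞,+∞]`. -/
def Cf (f : (ℕ → M) → ℝ) (x y : ℕ → M) : EReal :=
  ⨆ n : ℕ, ⨆ a : Fin (n + 1) → M,
    ((birk f (n + 1) (consW a x) - birk f (n + 1) (consW a y) : ℝ) : EReal)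

/-- The weak Walters condition. -/
def WeakWalters (f : (ℕ → M) → ℝ) : Prop :=
  ∀ ε : ℝ, 0 < ε → ∃ δ : ℝ, 0 < δ ∧ ∀ x y : ℕ → M,
    dOmega x y ≤ δ → Cf f x y ≤ (ε : EReal)

variable [MeasurableSpace M]

/-- The Ruelle operator `L_f φ(x) = ∫_M e^{f(ax)} φ(ax) dμ(a)`. -/
def ruelle (μ : Measure M) (f : (ℕ → M) → ℝ) (φ : (ℕ → M) → ℝ) : (ℕ → M) → ℝ :=
  fun x => ∫ a, Real.exp (f (cons a x)) * φ (cons a x) ∂μ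

/-- The Ruelle operator with weight `g`: `Lφ(x) = ∫_M g(ax) φ(ax) dμ(a)`. -/
def ruelleG (μ : Measure M) (g : (ℕ → M) → ℝ) (φ : (ℕ → M) → ℝ) : (ℕ → M) → ℝ :=
  fun x => ∫ a, g (cons a x) * φ (cons a x) ∂μ

/-- The sup norm `‖·‖₀` of a real function on `Ω`. -/
def supNorm (ψ : (ℕ → M) → ℝ) : ℝ := ⨆ x : ℕ → M, |ψ x|


set_option linter.unusedSectionVars false

lemma continuous_cons : Continuous (fun p : M × (ℕ → M) => cons p.1 p.2) := by
  apply continuous_pi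
  intro k
  cases k with
  | zero => exact continuous_fst
  | succ n => exact (continuous_apply n).comp continuous_snd

lemma shift_cons (a : M) (x : ℕ → M) : shift (cons a x) = x := rfl

lemma continuous_shift : Continuous (shift (M := M)) :=
  continuous_pi fun n => continuous_apply (n + 1)

lemma ruelle_shift_mul (μ : Measure M) (f φ g : (ℕ → M) → ℝ) :
    ruelle μ f (fun y => φ (shift y) * g y) = fun x => φ x * ruelle μ f g x := by
  funext x
  simp only [ruelle, shift_cons]
  rw [← integral_const_mul]
  congr 1; funext a; ring

lemma ruelle_iterate_shift_mul (μ : Measure M) (f : (ℕ → M) → ℝ) (n : ℕ)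
    (φ g : (ℕ → M) → ℝ) :
    (ruelle μ f)^[n] (fun y => φ (shift^[n] y) * g y)
      = fun x => φ x * (ruelle μ f)^[n] g x := by
  induction n generalizing g with
  | zero => simp
  | succ n ih =>
    rw [Function.iterate_succ_apply, Function.iterate_succ_apply]
    have h1 : ruelle μ f (fun y => φ (shift^[n + 1] y) * g y)
        = fun x => φ (shift^[n] x) * ruelle μ f g x := by
      have := ruelle_shift_mul μ f (fun z => φ (shift^[n] z)) g
      simpa [Function.iterate_succ_apply] using this
    rw [h1]
    exact ih (ruelle μ f g)

lemma ruelle_const_mul (μ : Measure M) (f : (ℕ → M) → ℝ) (c : ℝ) (g : (ℕ → M) → ℝ) :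
    ruelle μ f (fun y => c * g y) = fun x => c * ruelle μ f g x := by
  funext x
  simp only [ruelle]
  rw [← integral_const_mul]
  congr 1; funext a; ring

lemma ruelle_iterate_eig (μ : Measure M) (f : (ℕ → M) → ℝ) (lam : ℝ)
    (h : (ℕ → M) → ℝ) (heigf : ∀ x, ruelle μ f h x = lam * h x) (n : ℕ) :
    ∀ x, (ruelle μ f)^[n] h x = lam ^ n * h x := by
  induction n with
  | zero => simp
  | succ n ih =>
    intro x
    rw [Function.iterate_succ_apply']
    have h1 : (ruelle μ f)^[n] h = fun y => lam ^ n * h y := funext ih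
    rw [h1, ruelle_const_mul]
    show lam ^ n * ruelle μ f h x = _
    rw [heigf x]
    ring

lemma integrable_cont [CompactSpace M] [BorelSpace M] {φ : (ℕ → M) → ℝ}
    (hφ : Continuous φ)
    (ν : Measure (ℕ → M)) [IsFiniteMeasure ν] : Integrable φ ν :=
  hφ.integrable_of_hasCompactSupport (HasCompactSupport.of_compactSpace _)

lemma ruelle_continuous [CompactSpace M] [BorelSpace M]
    (μ : Measure M) [IsProbabilityMeasure μ]
    {f φ : (ℕ → M) → ℝ} (hf : Continuous f) (hφ : Continuous φ) :
    Continuous (ruelle μ f φ) := by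
  have h1 : Continuous (fun p : (ℕ → M) × M => cons p.2 p.1) :=
    continuous_cons.comp (continuous_snd.prodMk continuous_fst)
  have hc : Continuous (Function.uncurry fun (x : ℕ → M) (a : M) =>
      Real.exp (f (cons a x)) * φ (cons a x)) :=
    (Real.continuous_exp.comp (hf.comp h1)).mul (hφ.comp h1)
  have := continuous_parametric_integral_of_continuous (μ := μ) hc isCompact_univ
  simp only [Measure.restrict_univ] at this
  exact this

lemma ruelle_iterate_continuous [CompactSpace M] [BorelSpace M]
    (μ : Measure M) [IsProbabilityMeasure μ]
    {f : (ℕ → M) → ℝ} (hf : Continuous f) (n : ℕ) {φ : (ℕ → M) → ℝ}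
    (hφ : Continuous φ) : Continuous ((ruelle μ f)^[n] φ) := by
  induction n generalizing φ with
  | zero => simpa
  | succ n ih =>
    rw [Function.iterate_succ_apply]
    exact ih (ruelle_continuous μ hf hφ)

lemma integral_ruelle_iterate [CompactSpace M] [BorelSpace M]
    (μ : Measure M) [IsProbabilityMeasure μ]
    {f : (ℕ → M) → ℝ} (hf : Continuous f) (lam : ℝ)
    (ν : Measure (ℕ → M)) [IsProbabilityMeasure ν]
    (heigm : ∀ φ : (ℕ → M) → ℝ, Continuous φ →
      ∫ z, ruelle μ f φ z ∂ν = lam * ∫ z, φ z ∂ν)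
    (n : ℕ) : ∀ φ : (ℕ → M) → ℝ, Continuous φ →
      ∫ z, (ruelle μ f)^[n] φ z ∂ν = lam ^ n * ∫ z, φ z ∂ν := by
  induction n with
  | zero => simp
  | succ n ih =>
    intro φ hφ
    rw [Function.iterate_succ_apply]
    rw [ih _ (ruelle_continuous μ hf hφ), heigm φ hφ]
    ring

/-- Let `f` be continuous, `λ > 0`, `h` continuous and `ν` a Borel
probability measure with `L_f h = λ h` and `∫ L_f φ dν = λ ∫ φ dν` for all continuous
`φ`.  Then for all continuous `φ₁, φ₂` and every `n ≥ 1`: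
`|∫ (φ₁∘σⁿ)·φ₂·h dν − (∫ φ₁·h dν)(∫ φ₂·h dν)|
  ≤ (∫ |φ₁| dν) · ‖λ^{-n} L_fⁿ(φ₂·h − h·∫ φ₂·h dν)‖₀`. -/
theorem statement17 [CompactSpace M] [BorelSpace M]
    (μ : Measure M) [IsProbabilityMeasure μ]
    (f : (ℕ → M) → ℝ) (hf : Continuous f)
    (lam : ℝ) (hlam : 0 < lam)
    (h : (ℕ → M) → ℝ) (hh : Continuous h)
    (ν : Measure (ℕ → M)) [IsProbabilityMeasure ν]
    (heigf : ∀ x, ruelle μ f h x = lam * h x)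
    (heigm : ∀ φ : (ℕ → M) → ℝ, Continuous φ →
      ∫ z, ruelle μ f φ z ∂ν = lam * ∫ z, φ z ∂ν)
    (φ₁ φ₂ : (ℕ → M) → ℝ) (hφ₁ : Continuous φ₁) (hφ₂ : Continuous φ₂)
    (n : ℕ) (hn : 1 ≤ n) :
    |(∫ x, φ₁ (shift^[n] x) * φ₂ x * h x ∂ν) -
        (∫ x, φ₁ x * h x ∂ν) * (∫ x, φ₂ x * h x ∂ν)|
      ≤ (∫ x, |φ₁ x| ∂ν) *
        supNorm (fun x => (lam ^ n)⁻¹ *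
          ((ruelle μ f)^[n]
            (fun y => φ₂ y * h y - h y * ∫ z, φ₂ z * h z ∂ν)) x) := by
  have hlamn : (lam : ℝ) ^ n ≠ 0 := pow_ne_zero n (ne_of_gt hlam)
  set c : ℝ := ∫ z, φ₂ z * h z ∂ν with hc
  set ψ : (ℕ → M) → ℝ := fun y => φ₂ y * h y - h y * c with hψdef
  have hψc : Continuous ψ := (hφ₂.mul hh).sub (hh.mul continuous_const)
  have hLψc : Continuous ((ruelle μ f)^[n] ψ) :=
    ruelle_iterate_continuous μ hf n hψc
  set G : (ℕ → M) → ℝ := fun x => (lam ^ n)⁻¹ * ((ruelle μ f)^[n] ψ) x with hGdef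
  have hGc : Continuous G := continuous_const.mul hLψc
  have hσ : Continuous (shift^[n] : (ℕ → M) → ℕ → M) := continuous_shift.iterate n
  have hφ₁σ : Continuous (fun x => φ₁ (shift^[n] x)) := hφ₁.comp hσ
  have e1 : ∫ x, φ₁ (shift^[n] x) * h x ∂ν = ∫ x, φ₁ x * h x ∂ν := by
    apply mul_left_cancel₀ hlamn
    rw [← integral_ruelle_iterate μ hf lam ν heigm n (fun x => φ₁ (shift^[n] x) * h x) (hφ₁σ.mul hh)]
    rw [ruelle_iterate_shift_mul μ f n φ₁ h]
    have : (fun x => φ₁ x * (ruelle μ f)^[n] h x)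
        = fun x => lam ^ n * (φ₁ x * h x) := by
      funext x; rw [ruelle_iterate_eig μ f lam h heigf n x]; ring
    rw [this, integral_const_mul]
  have e2 : ∫ x, φ₁ (shift^[n] x) * ψ x ∂ν = ∫ x, φ₁ x * G x ∂ν := by
    apply mul_left_cancel₀ hlamn
    rw [← integral_ruelle_iterate μ hf lam ν heigm n (fun x => φ₁ (shift^[n] x) * ψ x) (hφ₁σ.mul hψc)]
    rw [ruelle_iterate_shift_mul μ f n φ₁ ψ]
    have : (fun x => φ₁ x * (ruelle μ f)^[n] ψ x)
        = fun x => lam ^ n * (φ₁ x * G x) := by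
      funext x
      simp only [hGdef]
      field_simp
    rw [this, integral_const_mul]
  have e3 : ∫ x, φ₁ (shift^[n] x) * φ₂ x * h x ∂ν
      = (∫ x, φ₁ (shift^[n] x) * ψ x ∂ν) + c * ∫ x, φ₁ (shift^[n] x) * h x ∂ν := by
    rw [← integral_const_mul, ← integral_add
      (integrable_cont (φ := fun x => φ₁ (shift^[n] x) * ψ x) (hφ₁σ.mul hψc) ν)
      (integrable_cont (φ := fun x => c * (φ₁ (shift^[n] x) * h x)) (continuous_const.mul (hφ₁σ.mul hh)) ν)]
    congr 1; funext x; simp only [hψdef]; ring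
  have e4 : (∫ x, φ₁ (shift^[n] x) * φ₂ x * h x ∂ν) -
      (∫ x, φ₁ x * h x ∂ν) * c = ∫ x, φ₁ x * G x ∂ν := by
    rw [e3, e1, e2]; ring
  rw [e4]
  have hbdd : BddAbove (Set.range fun x : ℕ → M => |G x|) :=
    (isCompact_range (continuous_abs.comp hGc)).bddAbove
  have hS : ∀ x, |G x| ≤ supNorm G := fun x => le_ciSup hbdd x
  calc |∫ x, φ₁ x * G x ∂ν| ≤ ∫ x, |φ₁ x| * |G x| ∂ν := by
        simpa [Real.norm_eq_abs, abs_mul] using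
          norm_integral_le_integral_norm (fun x => φ₁ x * G x) (μ := ν)
    _ ≤ ∫ x, |φ₁ x| * supNorm G ∂ν := by
        apply integral_mono (integrable_cont (hφ₁.abs.mul hGc.abs) ν)
          (integrable_cont (hφ₁.abs.mul continuous_const) ν)
        intro x
        exact mul_le_mul_of_nonneg_left (hS x) (abs_nonneg _)
    _ = (∫ x, |φ₁ x| ∂ν) * supNorm G := integral_mul_const _ _


end Paper
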